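/- Let a, M > 0 and let A : [0,∞) → ℝ be differentiable with A(t) ≥ a and |A'(t)| ≤ M for all t ≥ 0. Define f(t) := ∫₀ᵗ exp(−∫_η^t A(τ) dτ) dη. Then for all t ≥ 0, 0 ≤ f(t) ≤ 1/a and f(t) A(t) ≤ 2 + M/a². -/

import Mathlib

open MeasureTheory intervalIntegral Set

set_option maxHeartbeats 1000000

/-- Uniform bounds on `f(t) = ∫₀ᵗ exp(−∫_η^t A(τ) dτ) dη` and on `f(t)A(t)`:
if `A ≥ a > 0` and `|A'| ≤ M` on `[0,∞)`, then `0 ≤ f(t) ≤ 1/a` and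
`f(t)A(t) ≤ 2 + M/a²`. -/
theorem transition_integral_bounds (a M : ℝ) (ha : 0 < a) (hM : 0 < M)
    (A A' : ℝ → ℝ)
    (hderiv : ∀ t ≥ (0 : ℝ), HasDerivAt A (A' t) t)
    (hlb : ∀ t ≥ (0 : ℝ), a ≤ A t)
    (hub : ∀ t ≥ (0 : ℝ), |A' t| ≤ M) :
    ∀ t ≥ (0 : ℝ),
      0 ≤ (∫ η in (0 : ℝ)..t, Real.exp (-(∫ τ in η..t, A τ))) ∧
      (∫ η in (0 : ℝ)..t, Real.exp (-(∫ τ in η..t, A τ))) ≤ 1 / a ∧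
      (∫ η in (0 : ℝ)..t, Real.exp (-(∫ τ in η..t, A τ))) * A t
        ≤ 2 + M / a ^ 2 := by
  intro t ht
  set g : ℝ → ℝ := fun η => ∫ τ in η..t, A τ with hg_def
  set F : ℝ → ℝ := fun η => Real.exp (-(g η)) with hF_def
  have hAcont : ContinuousOn A (Ici 0) := fun x hx =>
    (hderiv x hx).continuousAt.continuousWithinAt
  have hAi : ∀ u v : ℝ, 0 ≤ u → 0 ≤ v → IntervalIntegrable A volume u v := by
    intro u v hu hv
    exact (hAcont.mono fun x hx => (le_min hu hv).trans hx.1).intervalIntegrable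
  -- continuity of g and F on [0,t]
  have hIO : IntegrableOn A (uIcc 0 t) := by
    rw [uIcc_of_le ht]
    exact (hAcont.mono Icc_subset_Ici_self).integrableOn_Icc
  have hgcont : ContinuousOn g (Icc 0 t) := by
    have := intervalIntegral.continuousOn_primitive_interval_left
      (f := A) (μ := volume) (a := (0:ℝ)) (b := t) hIO
    simpa [uIcc_of_le ht] using this
  have hFcont : ContinuousOn F (Icc 0 t) := Real.continuous_exp.comp_continuousOn hgcont.neg
  -- pointwise lower bound a*(t-η) ≤ g η on [0,t]
  have hg_lb : ∀ η ∈ Icc (0:ℝ) t, a * (t - η) ≤ g η := by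
    intro η hη
    have h1 : (∫ _ in η..t, a) ≤ ∫ τ in η..t, A τ :=
      intervalIntegral.integral_mono_on hη.2 intervalIntegrable_const
        (hAi η t hη.1 ht) (fun τ hτ => hlb τ (hη.1.trans hτ.1))
    simpa [mul_comm] using h1
  have hF_ub : ∀ η ∈ Icc (0:ℝ) t, F η ≤ Real.exp (-(a * (t - η))) := by
    intro η hη
    exact Real.exp_le_exp.2 (neg_le_neg (hg_lb η hη))
  have hF_pos : ∀ η : ℝ, 0 ≤ F η := fun η => (Real.exp_pos _).le
  -- part 1 : 0 ≤ f t
  have h0 : 0 ≤ ∫ η in (0:ℝ)..t, F η :=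
    intervalIntegral.integral_nonneg ht fun η _ => hF_pos η
  -- integrability of F and the exponential bound
  have hFi : IntervalIntegrable F volume 0 t :=
    (hFcont.mono (by rw [uIcc_of_le ht])).intervalIntegrable
  have hexpcont : Continuous fun η : ℝ => Real.exp (-(a * (t - η))) :=
    Real.continuous_exp.comp ((continuous_const.mul (continuous_const.sub continuous_id)).neg)
  have hexpi : IntervalIntegrable (fun η => Real.exp (-(a * (t - η)))) volume 0 t :=
    hexpcont.intervalIntegrable 0 t
  -- ∫₀ᵗ exp(-(a(t-η))) dη = 1/a - exp(-(a t))/a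
  have hint_exp : (∫ η in (0:ℝ)..t, Real.exp (-(a * (t - η))))
      = Real.exp (-(a * (t - t))) / a - Real.exp (-(a * (t - 0))) / a := by
    have hD : ∀ η ∈ uIcc (0:ℝ) t,
        HasDerivAt (fun x => Real.exp (-(a * (t - x))) / a) (Real.exp (-(a * (t - η)))) η := by
      intro η _
      have h1 : HasDerivAt (fun x : ℝ => -(a * (t - x))) a η := by
        have := ((hasDerivAt_id η).const_sub t).const_mul a
        simpa [Pi.neg_def] using this.neg
      have := (h1.exp).div_const a
      refine this.congr_deriv ?_
      field_simp
    rw [intervalIntegral.integral_eq_sub_of_hasDerivAt hD hexpi]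
  -- part 2 : f t ≤ 1/a
  have h1a : (∫ η in (0:ℝ)..t, F η) ≤ 1 / a := by
    have hle : (∫ η in (0:ℝ)..t, F η) ≤ ∫ η in (0:ℝ)..t, Real.exp (-(a * (t - η))) :=
      intervalIntegral.integral_mono_on ht hFi hexpi hF_ub
    have : (∫ η in (0:ℝ)..t, Real.exp (-(a * (t - η)))) ≤ 1 / a := by
      rw [hint_exp]
      simp only [sub_self, neg_zero, mul_zero, Real.exp_zero, sub_zero]
      have : 0 ≤ Real.exp (-(a * t)) / a := by positivity
      linarith
    linarith
  refine ⟨h0, h1a, ?_⟩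
  -- Key identity : ∫₀ᵗ F η * A η dη = 1 - exp(-(g 0))
  have hgt : g t = 0 := by simp [hg_def]
  have hFprod_cont : ContinuousOn (fun η => F η * A η) (Icc 0 t) :=
    hFcont.mul (hAcont.mono fun x hx => hx.1)
  have hFprodi : IntervalIntegrable (fun η => F η * A η) volume 0 t :=
    (hFprod_cont.mono (by rw [uIcc_of_le ht])).intervalIntegrable
  have hFderiv : ∀ η ∈ Ioo (0:ℝ) t, HasDerivAt F (F η * A η) η := by
    intro η hη
    have hmeas : StronglyMeasurableAtFilter A (nhds η) volume :=
      ⟨Ici 0, Ici_mem_nhds hη.1, hAcont.aestronglyMeasurable measurableSet_Ici⟩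
    have hprim : HasDerivAt g (-A η) η :=
      intervalIntegral.integral_hasDerivAt_left (hAi η t hη.1.le ht) hmeas
        (hderiv η hη.1.le).continuousAt
    have := (hprim.neg).exp
    simpa [hF_def, mul_comm] using this
  have hkey : (∫ η in (0:ℝ)..t, F η * A η) = 1 - Real.exp (-(g 0)) := by
    have := intervalIntegral.integral_eq_sub_of_hasDeriv_right_of_le ht hFcont
      (fun η hη => (hFderiv η hη).hasDerivWithinAt) hFprodi
    rw [this, hF_def]
    simp [hgt]
  have hkey_le : (∫ η in (0:ℝ)..t, F η * A η) ≤ 1 := by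
    rw [hkey]
    have : 0 ≤ Real.exp (-(g 0)) := (Real.exp_pos _).le
    linarith
  -- Lipschitz bound : |A t - A η| ≤ M * (t - η)
  have hLip : ∀ η ∈ Icc (0:ℝ) t, |A t - A η| ≤ M * (t - η) := by
    intro η hη
    have := Convex.norm_image_sub_le_of_norm_hasDerivWithin_le
      (f := A) (f' := A') (s := Ici 0) (C := M)
      (fun x hx => (hderiv x hx).hasDerivWithinAt)
      (fun x hx => by simpa using hub x hx) (convex_Ici 0) hη.1 ht
    simpa [Real.norm_eq_abs, abs_of_nonneg (sub_nonneg.2 hη.2)] using this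
  -- ∫₀ᵗ (t-η) exp(-(a(t-η))) dη ≤ 1/a²
  have hpoly_cont : Continuous fun η : ℝ => (t - η) * Real.exp (-(a * (t - η))) :=
    (continuous_const.sub continuous_id).mul hexpcont
  have hint_poly : (∫ η in (0:ℝ)..t, (t - η) * Real.exp (-(a * (t - η)))) ≤ 1 / a ^ 2 := by
    have hD : ∀ η ∈ uIcc (0:ℝ) t,
        HasDerivAt (fun x => ((t - x) / a + 1 / a ^ 2) * Real.exp (-(a * (t - x))))
          ((t - η) * Real.exp (-(a * (t - η)))) η := by
      intro η _
      have h1 : HasDerivAt (fun x : ℝ => -(a * (t - x))) a η := by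
        have := ((hasDerivAt_id η).const_sub t).const_mul a
        simpa [Pi.neg_def] using this.neg
      have h2 : HasDerivAt (fun x : ℝ => (t - x) / a + 1 / a ^ 2) (-1 / a) η := by
        have := (((hasDerivAt_id η).const_sub t).div_const a).add_const (1 / a ^ 2)
        exact this
      have := h2.mul h1.exp
      refine this.congr_deriv ?_
      have hexp : Real.exp (-(a * (t - η))) ≠ 0 := Real.exp_ne_zero _
      field_simp
      ring
    rw [intervalIntegral.integral_eq_sub_of_hasDerivAt hD (hpoly_cont.intervalIntegrable 0 t)]
    have hpos : 0 ≤ ((t - 0) / a + 1 / a ^ 2) * Real.exp (-(a * (t - 0))) := by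
      have h1 : (0:ℝ) ≤ (t - 0) / a + 1 / a ^ 2 :=
        add_nonneg (div_nonneg (by linarith) ha.le) (by positivity)
      exact mul_nonneg h1 (Real.exp_pos _).le
    have : ((t - t) / a + 1 / a ^ 2) * Real.exp (-(a * (t - t))) = 1 / a ^ 2 := by
      simp
    rw [this]
    linarith
  -- split f t * A t
  have hdiffi : IntervalIntegrable (fun η => F η * (A t - A η)) volume 0 t :=
    ((hFcont.mul (continuousOn_const.sub (hAcont.mono fun x hx => hx.1))).mono
      (by rw [uIcc_of_le ht])).intervalIntegrable
  have e1 : (∫ η in (0:ℝ)..t, F η * (A t - A η))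
      = (∫ η in (0:ℝ)..t, F η * A t) - ∫ η in (0:ℝ)..t, F η * A η := by
    rw [← intervalIntegral.integral_sub (hFi.mul_const (A t)) hFprodi]
    congr 1
    ext η
    ring
  have hsplit : (∫ η in (0:ℝ)..t, F η) * A t
      = (∫ η in (0:ℝ)..t, F η * (A t - A η)) + ∫ η in (0:ℝ)..t, F η * A η := by
    rw [e1, ← intervalIntegral.integral_mul_const]
    ring
  have hMi : IntervalIntegrable (fun η => M * ((t - η) * Real.exp (-(a * (t - η))))) volume 0 t :=
    (hpoly_cont.intervalIntegrable 0 t).const_mul M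
  have hdiff_le : (∫ η in (0:ℝ)..t, F η * (A t - A η)) ≤ M / a ^ 2 := by
    have hle : (∫ η in (0:ℝ)..t, F η * (A t - A η))
        ≤ ∫ η in (0:ℝ)..t, M * ((t - η) * Real.exp (-(a * (t - η)))) := by
      apply intervalIntegral.integral_mono_on ht hdiffi hMi
      intro η hη
      calc F η * (A t - A η) ≤ F η * |A t - A η| :=
            mul_le_mul_of_nonneg_left (le_abs_self _) (hF_pos η)
        _ ≤ Real.exp (-(a * (t - η))) * (M * (t - η)) :=
            mul_le_mul (hF_ub η hη) (hLip η hη) (abs_nonneg _) (Real.exp_pos _).le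
        _ = M * ((t - η) * Real.exp (-(a * (t - η)))) := by ring
    have h2 : (∫ η in (0:ℝ)..t, M * ((t - η) * Real.exp (-(a * (t - η)))))
        = M * ∫ η in (0:ℝ)..t, (t - η) * Real.exp (-(a * (t - η))) :=
      intervalIntegral.integral_const_mul M _
    rw [h2] at hle
    have := mul_le_mul_of_nonneg_left hint_poly hM.le
    calc (∫ η in (0:ℝ)..t, F η * (A t - A η))
        ≤ M * (1 / a ^ 2) := le_trans hle this
      _ = M / a ^ 2 := by ring
  calc (∫ η in (0:ℝ)..t, F η) * A t
      = (∫ η in (0:ℝ)..t, F η * (A t - A η)) + ∫ η in (0:ℝ)..t, F η * A η := hsplit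
    _ ≤ M / a ^ 2 + 1 := add_le_add hdiff_le hkey_le
    _ ≤ 2 + M / a ^ 2 := by linarith
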